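/- Lower bound for the contravariant Hessian: Assume (A1), W ∈ C²((0,∞)), G ∈ C([0,1]), fix an integer N ≥ 1 and p ∈ 𝐏_N. Suppose Λ₁ ∈ ℝ and C ≥ 0 satisfy k(q)·W''(q) + (1/2)·k'(q)·(W'(q) − G^N_i) ≥ Λ₁ for all q > 0 and all i = 1,…,N, and |k'(q)| ≤ C for all q > 0. Then for every ξ ∈ ℝ^N: (1/N)∑_{i=1}^N H_i(p)·(ξ_i − λ_ξ(p))² ≥ (Λ₁ − (C/2)·|λ(p)|)·(1/N)∑_{i=1}^N k(p_i)·(ξ_i − λ_ξ(p))². -/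
import Mathlib


open MeasureTheory Real Set Filter

noncomputable section

/-- Discrete load: `G^N_i = N·∫_{i/N}^{(i+1)/N} G`. -/
def GN (G : ℝ → ℝ) (N : ℕ) (i : Fin N) : ℝ :=
  (N : ℝ) * ∫ x in ((i : ℝ) / N)..(((i : ℝ) + 1) / N), G x

/-- Membership in the discrete probability simplex `𝐏_N`. -/
def memPN (N : ℕ) (p : Fin N → ℝ) : Prop :=
  (∀ i, 0 < p i) ∧ (1 / (N : ℝ)) * ∑ i, p i = 1

/-- Weighted mean of `W'(q) − G^N` with weights `k(q)`. -/
def lamN (k W' G : ℝ → ℝ) (N : ℕ) (q : Fin N → ℝ) : ℝ :=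
  (∑ j, k (q j) * (W' (q j) - GN G N j)) / (∑ j, k (q j))

/-- Weighted mean `λ_ξ(q)` of a covector `ξ` with weights `k(q)`. -/
def lamXi (k : ℝ → ℝ) (N : ℕ) (q ξ : Fin N → ℝ) : ℝ :=
  (∑ j, k (q j) * ξ j) / (∑ j, k (q j))

/-- The Hessian weight `H_i(q)`. -/
def HN (k k' W' W'' G : ℝ → ℝ) (N : ℕ) (q : Fin N → ℝ) (i : Fin N) : ℝ :=
  k (q i) * (k (q i) * W'' (q i)
    + 1 / 2 * k' (q i) * (W' (q i) - GN G N i - lamN k W' G N q))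

/-- Lower bound for the contravariant Hessian. -/
theorem hessian_lower_bound
    (k k' : ℝ → ℝ) (κl κu : ℝ)
    (hκl : 0 < κl) (hκlu : κl ≤ κu)
    (hk_cont : ContinuousOn k (Set.Ici 0))
    (hk_deriv : ∀ x > (0:ℝ), HasDerivAt k (k' x) x)
    (hk'_cont : ContinuousOn k' (Set.Ioi 0))
    (hk_bnd : ∀ x ≥ (0:ℝ), κl * x ≤ k x ∧ k x ≤ κu * x)
    (W W' W'' : ℝ → ℝ)
    (hW' : ∀ x > (0:ℝ), HasDerivAt W (W' x) x)
    (hW'' : ∀ x > (0:ℝ), HasDerivAt W' (W'' x) x)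
    (hW''c : ContinuousOn W'' (Set.Ioi 0))
    (G : ℝ → ℝ) (hG : ContinuousOn G (Set.Icc 0 1))
    (N : ℕ) (hN : 1 ≤ N) (p : Fin N → ℝ) (hp : memPN N p)
    (Λ₁ C : ℝ) (hC : 0 ≤ C)
    (hΛ : ∀ q > (0:ℝ), ∀ i : Fin N,
      Λ₁ ≤ k q * W'' q + 1 / 2 * k' q * (W' q - GN G N i))
    (hk'C : ∀ q > (0:ℝ), |k' q| ≤ C) :
    ∀ ξ : Fin N → ℝ,
      (Λ₁ - C / 2 * |lamN k W' G N p|) *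
          ((1 / (N:ℝ)) * ∑ i, k (p i) * (ξ i - lamXi k N p ξ)^2)
        ≤ (1 / (N:ℝ)) * ∑ i, HN k k' W' W'' G N p i * (ξ i - lamXi k N p ξ)^2 := by
  intro ξ
  set lam := lamN k W' G N p with hlam
  have key : ∀ i : Fin N,
      (Λ₁ - C / 2 * |lam|) * (k (p i) * (ξ i - lamXi k N p ξ)^2)
        ≤ HN k k' W' W'' G N p i * (ξ i - lamXi k N p ξ)^2 := by
    intro i
    have hpi : 0 < p i := hp.1 i
    have hk0 : 0 ≤ k (p i) := le_trans (by positivity) (hk_bnd (p i) hpi.le).1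
    have hΛi := hΛ (p i) hpi i
    have hk' := hk'C (p i) hpi
    have habs : 1 / 2 * k' (p i) * lam ≤ C / 2 * |lam| := by
      have h1 : 1 / 2 * k' (p i) * lam ≤ 1 / 2 * |k' (p i) * lam| := by
        have := le_abs_self (k' (p i) * lam)
        nlinarith
      have h2 : |k' (p i) * lam| = |k' (p i)| * |lam| := abs_mul _ _
      have h3 : |k' (p i)| * |lam| ≤ C * |lam| :=
        mul_le_mul_of_nonneg_right hk' (abs_nonneg _)
      nlinarith
    have hA : Λ₁ - C / 2 * |lam| ≤ k (p i) * W'' (p i)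
        + 1 / 2 * k' (p i) * (W' (p i) - GN G N i - lam) := by
      nlinarith
    have hsq : (0:ℝ) ≤ (ξ i - lamXi k N p ξ)^2 := sq_nonneg _
    have : (Λ₁ - C / 2 * |lam|) * k (p i) ≤ HN k k' W' W'' G N p i := by
      rw [HN]
      calc (Λ₁ - C / 2 * |lam|) * k (p i)
          ≤ (k (p i) * W'' (p i)
              + 1 / 2 * k' (p i) * (W' (p i) - GN G N i - lam)) * k (p i) :=
            mul_le_mul_of_nonneg_right hA hk0
        _ = _ := by ring
    calc (Λ₁ - C / 2 * |lam|) * (k (p i) * (ξ i - lamXi k N p ξ)^2)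
        = ((Λ₁ - C / 2 * |lam|) * k (p i)) * (ξ i - lamXi k N p ξ)^2 := by ring
      _ ≤ HN k k' W' W'' G N p i * (ξ i - lamXi k N p ξ)^2 :=
          mul_le_mul_of_nonneg_right this hsq
  have hNn : (0:ℝ) ≤ 1 / (N:ℝ) := by positivity
  calc (Λ₁ - C / 2 * |lam|) *
        ((1 / (N:ℝ)) * ∑ i, k (p i) * (ξ i - lamXi k N p ξ)^2)
      = (1 / (N:ℝ)) * ∑ i, (Λ₁ - C / 2 * |lam|) *
          (k (p i) * (ξ i - lamXi k N p ξ)^2) := by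
        rw [← Finset.mul_sum]; ring
    _ ≤ (1 / (N:ℝ)) * ∑ i, HN k k' W' W'' G N p i * (ξ i - lamXi k N p ξ)^2 :=
        mul_le_mul_of_nonneg_left (Finset.sum_le_sum fun i _ => key i) hNn
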